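/- Given an odd n and \epsilon > 0, there exists an odd N such that for all p in [\epsilon, 1-\epsilon], the concave envelope of p \mapsto L(p,N) on [0,1] satisfies \wideparen{L}(p,N) \leq L(p,n). -/

import Mathlib

/-- The expected majority-vote error `L(p, n)` for `n = 2k+1` i.i.d. Bernoulli(p) labels. -/
noncomputable def majErr (k : ℕ) (p : ℝ) : ℝ :=
  ∑ i ∈ Finset.range (k + 1),
      (Nat.choose (2 * k + 1) i : ℝ) * p ^ (i + 1) * (1 - p) ^ (2 * k + 1 - i)
    + ∑ i ∈ Finset.range (k + 1),
      (Nat.choose (2 * k + 1) i : ℝ) * p ^ (2 * k + 1 - i) * (1 - p) ^ (i + 1)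

/-- The concave envelope on `[0,1]`: the pointwise infimum over all concave majorants of `f`
on `[0,1]`, i.e. the smallest concave function on `[0,1]` majorizing `f`. -/
noncomputable def concEnv (f : ℝ → ℝ) (p : ℝ) : ℝ :=
  sInf {y : ℝ | ∃ g : ℝ → ℝ, ConcaveOn ℝ (Set.Icc (0 : ℝ) 1) g ∧
    (∀ x ∈ Set.Icc (0 : ℝ) 1, f x ≤ g x) ∧ y = g p}

/-- Upper tail of Binomial(2K+1, x): P(S ≥ K+1). -/
noncomputable def tailSum (K : ℕ) (x : ℝ) : ℝ :=
  ∑ j ∈ Finset.range (K + 1),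
    (Nat.choose (2 * K + 1) (K + 1 + j) : ℝ) * x ^ (K + 1 + j) * (1 - x) ^ (K - j)

lemma tailSum_eq_alt (K : ℕ) (x : ℝ) :
    tailSum K x = ∑ i ∈ Finset.range (K + 1),
      (Nat.choose (2 * K + 1) i : ℝ) * x ^ (2 * K + 1 - i) * (1 - x) ^ i := by
  rw [tailSum, ← Finset.sum_range_reflect]
  apply Finset.sum_congr rfl
  intro j hj
  rw [Finset.mem_range] at hj
  have e0 : K + 1 - 1 - j = K - j := by omega
  have e1 : K + 1 + (K - j) = 2 * K + 1 - j := by omega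
  have e2 : K - (K - j) = j := by omega
  rw [e0, e1, e2, Nat.choose_symm (by omega : j ≤ 2 * K + 1)]

lemma head_add_tailSum (K : ℕ) (x : ℝ) :
    (∑ i ∈ Finset.range (K + 1),
      (Nat.choose (2 * K + 1) i : ℝ) * x ^ i * (1 - x) ^ (2 * K + 1 - i)) + tailSum K x = 1 := by
  have hbin : ∑ i ∈ Finset.range (2 * K + 1 + 1),
      x ^ i * (1 - x) ^ (2 * K + 1 - i) * (Nat.choose (2 * K + 1) i : ℝ) = 1 := by
    have h := add_pow x (1 - x) (2 * K + 1)
    rw [show x + (1 - x) = 1 by ring, one_pow] at h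
    exact h.symm
  have hsplit : ∑ i ∈ Finset.range (2 * K + 1 + 1),
      x ^ i * (1 - x) ^ (2 * K + 1 - i) * (Nat.choose (2 * K + 1) i : ℝ)
      = (∑ i ∈ Finset.range (K + 1),
          x ^ i * (1 - x) ^ (2 * K + 1 - i) * (Nat.choose (2 * K + 1) i : ℝ))
        + ∑ j ∈ Finset.range (K + 1),
          x ^ (K + 1 + j) * (1 - x) ^ (2 * K + 1 - (K + 1 + j)) *
            (Nat.choose (2 * K + 1) (K + 1 + j) : ℝ) := by
    rw [show 2 * K + 1 + 1 = (K + 1) + (K + 1) by omega, Finset.sum_range_add]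
  calc (∑ i ∈ Finset.range (K + 1),
      (Nat.choose (2 * K + 1) i : ℝ) * x ^ i * (1 - x) ^ (2 * K + 1 - i)) + tailSum K x
      = (∑ i ∈ Finset.range (K + 1),
          x ^ i * (1 - x) ^ (2 * K + 1 - i) * (Nat.choose (2 * K + 1) i : ℝ))
        + ∑ j ∈ Finset.range (K + 1),
          x ^ (K + 1 + j) * (1 - x) ^ (2 * K + 1 - (K + 1 + j)) *
            (Nat.choose (2 * K + 1) (K + 1 + j) : ℝ) := by
        congr 1
        · exact Finset.sum_congr rfl (fun i _ => by ring)
        · rw [tailSum]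
          apply Finset.sum_congr rfl
          intro j hj
          rw [Finset.mem_range] at hj
          rw [show 2 * K + 1 - (K + 1 + j) = K - j by omega]
          ring
    _ = 1 := by rw [← hsplit]; exact hbin

lemma majErr_eq (K : ℕ) (x : ℝ) : majErr K x = x + (1 - 2 * x) * tailSum K x := by
  have h1 : ∑ i ∈ Finset.range (K + 1),
      (Nat.choose (2 * K + 1) i : ℝ) * x ^ (i + 1) * (1 - x) ^ (2 * K + 1 - i)
      = x * ∑ i ∈ Finset.range (K + 1),
        (Nat.choose (2 * K + 1) i : ℝ) * x ^ i * (1 - x) ^ (2 * K + 1 - i) := by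
    rw [Finset.mul_sum]; apply Finset.sum_congr rfl; intro i _; ring
  have h2 : ∑ i ∈ Finset.range (K + 1),
      (Nat.choose (2 * K + 1) i : ℝ) * x ^ (2 * K + 1 - i) * (1 - x) ^ (i + 1)
      = (1 - x) * tailSum K x := by
    rw [tailSum_eq_alt, Finset.mul_sum]; apply Finset.sum_congr rfl; intro i _; ring
  have h3 := head_add_tailSum K x
  have ha : ∑ i ∈ Finset.range (K + 1),
      (Nat.choose (2 * K + 1) i : ℝ) * x ^ i * (1 - x) ^ (2 * K + 1 - i) = 1 - tailSum K x := by
    linarith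
  rw [majErr, h1, h2, ha]
  ring

lemma majErr_symm (K : ℕ) (x : ℝ) : majErr K (1 - x) = majErr K x := by
  rw [majErr, majErr]
  have hx : (1 : ℝ) - (1 - x) = x := by ring
  rw [hx, add_comm]
  congr 1 <;> · apply Finset.sum_congr rfl; intro i _; ring

lemma tailSum_nonneg (K : ℕ) {x : ℝ} (h0 : 0 ≤ x) (h1 : x ≤ 1) : 0 ≤ tailSum K x := by
  apply Finset.sum_nonneg
  intro j _
  have : (0:ℝ) ≤ 1 - x := by linarith
  positivity

lemma tailSum_ge_pow (K : ℕ) {x : ℝ} (h0 : 0 ≤ x) (h1 : x ≤ 1) :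
    x ^ (2 * K + 1) ≤ tailSum K x := by
  have hK : K ∈ Finset.range (K + 1) := by simp
  have h1x : (0:ℝ) ≤ 1 - x := by linarith
  have hnn : ∀ j ∈ Finset.range (K + 1),
      0 ≤ (Nat.choose (2 * K + 1) (K + 1 + j) : ℝ) * x ^ (K + 1 + j) * (1 - x) ^ (K - j) :=
    fun j _ => mul_nonneg (mul_nonneg (Nat.cast_nonneg _) (pow_nonneg h0 _)) (pow_nonneg h1x _)
  have := Finset.single_le_sum hnn hK
  calc x ^ (2 * K + 1)
      = (Nat.choose (2 * K + 1) (K + 1 + K) : ℝ) * x ^ (K + 1 + K) * (1 - x) ^ (K - K) := by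
        rw [show K + 1 + K = 2 * K + 1 by omega, Nat.sub_self, Nat.choose_self, pow_zero]
        push_cast; ring
    _ ≤ tailSum K x := this

lemma sum_choose_high (K : ℕ) :
    ∑ j ∈ Finset.range (K + 1), Nat.choose (2 * K + 1) (K + 1 + j) = 4 ^ K := by
  have htot : ∑ i ∈ Finset.range (2 * K + 1 + 1), Nat.choose (2 * K + 1) i = 2 ^ (2 * K + 1) :=
    Nat.sum_range_choose (2 * K + 1)
  have hsplit : ∑ i ∈ Finset.range (2 * K + 1 + 1), Nat.choose (2 * K + 1) i
      = (∑ i ∈ Finset.range (K + 1), Nat.choose (2 * K + 1) i)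
        + ∑ j ∈ Finset.range (K + 1), Nat.choose (2 * K + 1) (K + 1 + j) := by
    rw [show 2 * K + 1 + 1 = (K + 1) + (K + 1) by omega, Finset.sum_range_add]
  have hsymm : ∑ i ∈ Finset.range (K + 1), Nat.choose (2 * K + 1) i
      = ∑ j ∈ Finset.range (K + 1), Nat.choose (2 * K + 1) (K + 1 + j) := by
    rw [← Finset.sum_range_reflect]
    apply Finset.sum_congr rfl
    intro j hj; rw [Finset.mem_range] at hj
    rw [← Nat.choose_symm (by omega : K + 1 + j ≤ 2 * K + 1)]
    congr 1
    omega
  have h4 : 2 ^ (2 * K + 1) = 2 * 4 ^ K := by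
    rw [pow_succ', pow_mul]; norm_num
  omega

lemma tailSum_le (K : ℕ) {x : ℝ} (h0 : 0 ≤ x) (h1 : x ≤ 1 / 2) :
    tailSum K x ≤ x * (4 * x * (1 - x)) ^ K := by
  have hq : x ≤ 1 - x := by linarith
  have hq0 : (0:ℝ) ≤ 1 - x := by linarith
  have hterm : ∀ j ∈ Finset.range (K + 1),
      (Nat.choose (2 * K + 1) (K + 1 + j) : ℝ) * x ^ (K + 1 + j) * (1 - x) ^ (K - j)
      ≤ (Nat.choose (2 * K + 1) (K + 1 + j) : ℝ) * (x ^ (K + 1) * (1 - x) ^ K) := by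
    intro j hj; rw [Finset.mem_range] at hj
    have e1 : x ^ (K + 1 + j) = x ^ (K + 1) * x ^ j := by rw [← pow_add]
    have e2 : (1 - x) ^ K = (1 - x) ^ j * (1 - x) ^ (K - j) := by
      rw [← pow_add]; congr 1; omega
    have hxj : x ^ j ≤ (1 - x) ^ j := pow_le_pow_left₀ h0 hq j
    calc (Nat.choose (2 * K + 1) (K + 1 + j) : ℝ) * x ^ (K + 1 + j) * (1 - x) ^ (K - j)
        = (Nat.choose (2 * K + 1) (K + 1 + j) : ℝ) * (x ^ (K + 1) * (1 - x) ^ (K - j)) * x ^ j := by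
          rw [e1]; ring
      _ ≤ (Nat.choose (2 * K + 1) (K + 1 + j) : ℝ) * (x ^ (K + 1) * (1 - x) ^ (K - j)) * (1 - x) ^ j := by
          apply mul_le_mul_of_nonneg_left hxj (by positivity)
      _ = (Nat.choose (2 * K + 1) (K + 1 + j) : ℝ) * (x ^ (K + 1) * ((1 - x) ^ j * (1 - x) ^ (K - j))) := by ring
      _ = (Nat.choose (2 * K + 1) (K + 1 + j) : ℝ) * (x ^ (K + 1) * (1 - x) ^ K) := by rw [← e2]
  calc tailSum K x ≤ ∑ j ∈ Finset.range (K + 1),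
        (Nat.choose (2 * K + 1) (K + 1 + j) : ℝ) * (x ^ (K + 1) * (1 - x) ^ K) :=
        Finset.sum_le_sum hterm
    _ = (4 : ℝ) ^ K * (x ^ (K + 1) * (1 - x) ^ K) := by
        rw [← Finset.sum_mul]
        congr 1
        rw [← Nat.cast_sum, sum_choose_high]
        push_cast; ring
    _ = x * (4 * x * (1 - x)) ^ K := by rw [mul_pow, mul_pow, pow_succ]; ring

lemma tailSum_half (K : ℕ) : tailSum K (1 / 2) = 1 / 2 := by
  have h := head_add_tailSum K (1 / 2)
  have heq : (∑ i ∈ Finset.range (K + 1),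
      (Nat.choose (2 * K + 1) i : ℝ) * (1/2 : ℝ) ^ i * (1 - 1/2 : ℝ) ^ (2 * K + 1 - i))
      = tailSum K (1 / 2) := by
    rw [tailSum_eq_alt]
    apply Finset.sum_congr rfl
    intro i hi; rw [Finset.mem_range] at hi
    rw [show (1 : ℝ) - 1/2 = 1/2 by norm_num]
    rw [mul_assoc, mul_assoc, ← pow_add, ← pow_add]
    congr 2
    omega
  rw [heq] at h
  linarith


-- Bernoulli-type bound
lemma pow_one_sub_le (K : ℕ) {a : ℝ} (h0 : 0 ≤ a) (h1 : a ≤ 1) :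
    (1 - a) ^ K * (1 + K * a) ≤ 1 := by
  have hb : 1 + (K:ℝ) * a ≤ (1 + a) ^ K := by
    have := one_add_mul_le_pow (by linarith : (-2:ℝ) ≤ a) K
    linarith
  calc (1 - a) ^ K * (1 + (K:ℝ) * a) ≤ (1 - a) ^ K * (1 + a) ^ K := by
        apply mul_le_mul_of_nonneg_left hb (pow_nonneg (by linarith) _)
    _ = ((1 - a) * (1 + a)) ^ K := (mul_pow _ _ _).symm
    _ = (1 - a ^ 2) ^ K := by ring_nf
    _ ≤ 1 := by
        apply pow_le_one₀ (by nlinarith) (by nlinarith)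

lemma pow_one_sub_le' (K : ℕ) {a : ℝ} (h0 : 0 ≤ a) (h1 : a ≤ 1) :
    (1 - a) ^ K ≤ 1 / (1 + K * a) := by
  have hd : (0:ℝ) < 1 + K * a := by positivity
  rw [le_div_iff₀ hd]
  exact pow_one_sub_le K h0 h1

lemma bern_eta (K : ℕ) {u η : ℝ} (hu0 : 0 ≤ u) (hu1 : u ≤ 1) (hη0 : 0 < η) (hη1 : η ≤ 1)
    (hK : 1 / η ^ 3 ≤ (K:ℝ)) : u * (1 - u ^ 2) ^ K ≤ η := by
  have hsq0 : 0 ≤ u ^ 2 := sq_nonneg u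
  have hsq1 : u ^ 2 ≤ 1 := by nlinarith
  have hpow0 : (0:ℝ) ≤ (1 - u ^ 2) ^ K := pow_nonneg (by nlinarith) _
  rcases le_or_gt u η with h | h
  · calc u * (1 - u ^ 2) ^ K ≤ u * 1 := by
          apply mul_le_mul_of_nonneg_left _ hu0
          apply pow_le_one₀ (by nlinarith) (by nlinarith)
      _ = u := mul_one u
      _ ≤ η := h
  · have hη2 : η ^ 2 ≤ u ^ 2 := by nlinarith
    have h1 : (1 - u ^ 2) ^ K ≤ (1 - η ^ 2) ^ K := by
      apply pow_le_pow_left₀ (by nlinarith) (by nlinarith)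
    have h2 : (1 - η ^ 2) ^ K ≤ 1 / (1 + K * η ^ 2) := pow_one_sub_le' K (by positivity) (by nlinarith)
    have hKpos : (0:ℝ) < 1 + K * η ^ 2 := by positivity
    have h3 : 1 / (1 + (K:ℝ) * η ^ 2) ≤ η := by
      rw [div_le_iff₀ hKpos]
      have hKη3 : 1 ≤ (K:ℝ) * η ^ 3 := by
        rw [div_le_iff₀ (by positivity)] at hK
        linarith
      have he : η * (1 + (K:ℝ) * η ^ 2) = η + (K:ℝ) * η ^ 3 := by ring
      linarith
    calc u * (1 - u ^ 2) ^ K ≤ 1 * (1 - u ^ 2) ^ K := by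
          apply mul_le_mul_of_nonneg_right hu1 hpow0
      _ = (1 - u ^ 2) ^ K := one_mul _
      _ ≤ η := le_trans (le_trans h1 h2) h3

-- q^j - x^j ≤ j (q - x)
lemma pow_sub_pow_le (j : ℕ) {x q : ℝ} (hx : 0 ≤ x) (hxq : x ≤ q) (hq : q ≤ 1) :
    q ^ j - x ^ j ≤ j * (q - x) := by
  induction j with
  | zero => simp
  | succ n ih =>
    have hqn : q ^ n ≤ 1 := pow_le_one₀ (le_trans hx hxq) hq
    have hxn : x ^ n ≤ q ^ n := pow_le_pow_left₀ hx hxq n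
    have hxnn : (0:ℝ) ≤ x ^ n := pow_nonneg hx n
    calc q ^ (n+1) - x ^ (n+1) = q * (q ^ n - x ^ n) + (q - x) * x ^ n := by ring
      _ ≤ 1 * (n * (q - x)) + (q - x) * 1 := by
          have t1 : q * (q ^ n - x ^ n) ≤ 1 * (n * (q - x)) := by
            calc q * (q ^ n - x ^ n) ≤ 1 * (q ^ n - x ^ n) := by
                  apply mul_le_mul_of_nonneg_right hq (by linarith)
              _ = q ^ n - x ^ n := one_mul _
              _ ≤ n * (q - x) := ih
              _ = 1 * (n * (q - x)) := (one_mul _).symm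
          have t2 : (q - x) * x ^ n ≤ (q - x) * 1 := by
            apply mul_le_mul_of_nonneg_left _ (by linarith)
            exact pow_le_one₀ hx (le_trans hxq hq)
          linarith
      _ = (n + 1 : ℕ) * (q - x) := by push_cast; ring

def natB (k : ℕ) : ℕ := ∑ i ∈ Finset.range (k + 1), (2 * k + 1).choose i * (2 * k + 1 - 2 * i)

lemma natB_ge (k : ℕ) : 1 ≤ natB k := by
  rw [natB]
  have h1 : 1 ≤ (2 * k + 1).choose 0 * (2 * k + 1 - 2 * 0) := by simp
  refine h1.trans (Finset.single_le_sum (f := fun i => (2 * k + 1).choose i * (2 * k + 1 - 2 * i))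
    (fun i _ => Nat.zero_le _) (Finset.mem_range.mpr (by omega)))

lemma one_sub_two_tail_le (k : ℕ) {x : ℝ} (h0 : 0 ≤ x) (h1 : x ≤ 1 / 2) :
    1 - 2 * tailSum k x ≤ (natB k : ℝ) * (1 - 2 * x) := by
  have hq0 : (0:ℝ) ≤ 1 - x := by linarith
  have hq1 : (1:ℝ) - x ≤ 1 := by linarith
  have hxq : x ≤ 1 - x := by linarith
  have hhead := head_add_tailSum k x
  have hsub : 1 - 2 * tailSum k x
      = ∑ i ∈ Finset.range (k + 1), (Nat.choose (2 * k + 1) i : ℝ) *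
          (x ^ i * (1 - x) ^ (2 * k + 1 - i) - x ^ (2 * k + 1 - i) * (1 - x) ^ i) := by
    have : 1 - 2 * tailSum k x
        = (∑ i ∈ Finset.range (k + 1),
            (Nat.choose (2 * k + 1) i : ℝ) * x ^ i * (1 - x) ^ (2 * k + 1 - i)) - tailSum k x := by
      linarith
    rw [this, tailSum_eq_alt, ← Finset.sum_sub_distrib]
    apply Finset.sum_congr rfl
    intro i _; ring
  rw [hsub]
  have hbnd : ∀ i ∈ Finset.range (k + 1),
      (Nat.choose (2 * k + 1) i : ℝ) *
          (x ^ i * (1 - x) ^ (2 * k + 1 - i) - x ^ (2 * k + 1 - i) * (1 - x) ^ i)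
      ≤ (Nat.choose (2 * k + 1) i : ℝ) * ((2 * k + 1 - 2 * i : ℕ) * (1 - 2 * x)) := by
    intro i hi
    rw [Finset.mem_range] at hi
    have hji : 2 * k + 1 - i = (2 * k + 1 - 2 * i) + i := by omega
    set j := 2 * k + 1 - 2 * i with hj
    have e1 : x ^ i * (1 - x) ^ (2 * k + 1 - i) = (x * (1 - x)) ^ i * (1 - x) ^ j := by
      rw [hji, pow_add, mul_pow]; ring
    have e2 : x ^ (2 * k + 1 - i) * (1 - x) ^ i = (x * (1 - x)) ^ i * x ^ j := by
      rw [hji, pow_add, mul_pow]; ring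
    rw [e1, e2, ← mul_sub]
    apply mul_le_mul_of_nonneg_left _ (Nat.cast_nonneg _)
    have hxq1 : (x * (1 - x)) ^ i ≤ 1 := by
      apply pow_le_one₀ (by positivity) (by nlinarith)
    have hdiff : (0:ℝ) ≤ (1 - x) ^ j - x ^ j := by
      have := pow_le_pow_left₀ h0 hxq j
      linarith
    calc (x * (1 - x)) ^ i * ((1 - x) ^ j - x ^ j) ≤ 1 * ((1 - x) ^ j - x ^ j) := by
          apply mul_le_mul_of_nonneg_right hxq1 hdiff
      _ = (1 - x) ^ j - x ^ j := one_mul _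
      _ ≤ j * ((1 - x) - x) := pow_sub_pow_le j h0 hxq hq1
      _ = (j : ℝ) * (1 - 2 * x) := by ring
  calc ∑ i ∈ Finset.range (k + 1), (Nat.choose (2 * k + 1) i : ℝ) *
          (x ^ i * (1 - x) ^ (2 * k + 1 - i) - x ^ (2 * k + 1 - i) * (1 - x) ^ i)
      ≤ ∑ i ∈ Finset.range (k + 1), (Nat.choose (2 * k + 1) i : ℝ) *
          ((2 * k + 1 - 2 * i : ℕ) * (1 - 2 * x)) := Finset.sum_le_sum hbnd
    _ = (natB k : ℝ) * (1 - 2 * x) := by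
        rw [natB]
        push_cast
        rw [Finset.sum_mul]
        apply Finset.sum_congr rfl
        intro i _; ring

lemma hasDerivAt_tailSum (K : ℕ) (x : ℝ) :
    HasDerivAt (tailSum K)
      ((((K + 1) * Nat.choose (2 * K + 1) (K + 1) : ℕ) : ℝ) * (x * (1 - x)) ^ K) x := by
  classical
  set bfun : ℕ → ℝ := fun j =>
    (((K + 1 + j) * Nat.choose (2 * K + 1) (K + 1 + j) : ℕ) : ℝ) * x ^ (K + j) * (1 - x) ^ (K - j)
    with hbfun
  have hterm : ∀ j ∈ Finset.range (K + 1),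
      HasDerivAt (fun y : ℝ => (Nat.choose (2 * K + 1) (K + 1 + j) : ℝ) * y ^ (K + 1 + j) *
        (1 - y) ^ (K - j)) (bfun j - bfun (j + 1)) x := by
    intro j hj
    rw [Finset.mem_range] at hj
    have hq : HasDerivAt (fun y : ℝ => 1 - y) (0 - 1) x :=
      (hasDerivAt_const x 1).sub (hasDerivAt_id x)
    have hqp : HasDerivAt (fun y : ℝ => (1 - y) ^ (K - j))
        (((K - j : ℕ) : ℝ) * (1 - x) ^ (K - j - 1) * (0 - 1)) x :=
      (hasDerivAt_pow (K - j) (1 - x)).comp x hq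
    have hxp : HasDerivAt (fun y : ℝ => y ^ (K + 1 + j))
        (((K + 1 + j : ℕ) : ℝ) * x ^ (K + j)) x := by
      have := hasDerivAt_pow (K + 1 + j) x
      simpa [show K + 1 + j - 1 = K + j by omega] using this
    have hmul := (hxp.mul hqp).const_mul (Nat.choose (2 * K + 1) (K + 1 + j) : ℝ)
    have heq : (Nat.choose (2 * K + 1) (K + 1 + j) : ℝ) *
        (((K + 1 + j : ℕ) : ℝ) * x ^ (K + j) * (1 - x) ^ (K - j) +
          x ^ (K + 1 + j) * (((K - j : ℕ) : ℝ) * (1 - x) ^ (K - j - 1) * (0 - 1)))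
        = bfun j - bfun (j + 1) := by
      simp only [hbfun]
      have hc : ((K + 1 + (j + 1)) * Nat.choose (2 * K + 1) (K + 1 + (j + 1)) : ℕ)
          = (Nat.choose (2 * K + 1) (K + 1 + j)) * (K - j) := by
        have := Nat.choose_succ_right_eq (2 * K + 1) (K + 1 + j)
        have harg : K + 1 + (j + 1) = (K + 1 + j) + 1 := by omega
        have hsub : 2 * K + 1 - (K + 1 + j) = K - j := by omega
        rw [harg, mul_comm]
        rw [hsub] at this
        exact this
      have hexp : K - (j + 1) = K - j - 1 := by omega
      have hexp2 : K + (j + 1) = K + 1 + j := by omega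
      rw [hc, hexp, hexp2]
      push_cast
      ring
    rw [heq] at hmul
    have : (fun y : ℝ => (Nat.choose (2 * K + 1) (K + 1 + j) : ℝ) *
        (y ^ (K + 1 + j) * (1 - y) ^ (K - j)))
        = fun y : ℝ => (Nat.choose (2 * K + 1) (K + 1 + j) : ℝ) * y ^ (K + 1 + j) *
          (1 - y) ^ (K - j) := by
      funext y; ring
    simp only [Pi.mul_apply] at hmul
    rw [this] at hmul
    exact hmul
  have hsum := HasDerivAt.sum hterm
  have htel : ∑ j ∈ Finset.range (K + 1), (bfun j - bfun (j + 1)) = bfun 0 - bfun (K + 1) :=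
    Finset.sum_range_sub' bfun (K + 1)
  have hb0 : bfun 0 = (((K + 1) * Nat.choose (2 * K + 1) (K + 1) : ℕ) : ℝ) * (x * (1 - x)) ^ K := by
    simp only [hbfun, Nat.add_zero, Nat.sub_zero]
    rw [mul_pow]
    ring
  have hbK : bfun (K + 1) = 0 := by
    simp only [hbfun]
    have : Nat.choose (2 * K + 1) (K + 1 + (K + 1)) = 0 :=
      Nat.choose_eq_zero_of_lt (by omega)
    simp [this]
  rw [htel, hb0, hbK, sub_zero] at hsum
  have hfun : (fun y : ℝ => ∑ j ∈ Finset.range (K + 1),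
      (Nat.choose (2 * K + 1) (K + 1 + j) : ℝ) * y ^ (K + 1 + j) * (1 - y) ^ (K - j))
      = tailSum K := by
    funext y; rw [tailSum]
  simp only [Finset.sum_fn] at hsum
  rwa [hfun] at hsum

lemma convexOn_tailSum (K : ℕ) : ConvexOn ℝ (Set.Icc (0:ℝ) (1/2)) (tailSum K) := by
  have hderiv : ∀ x : ℝ, deriv (tailSum K) x
      = (((K + 1) * Nat.choose (2 * K + 1) (K + 1) : ℕ) : ℝ) * (x * (1 - x)) ^ K :=
    fun x => (hasDerivAt_tailSum K x).deriv
  apply MonotoneOn.convexOn_of_deriv (convex_Icc _ _)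
  · exact fun x _ => (hasDerivAt_tailSum K x).continuousAt.continuousWithinAt
  · exact fun x _ => (hasDerivAt_tailSum K x).differentiableAt.differentiableWithinAt
  · intro a ha b hb hab
    rw [interior_Icc, Set.mem_Ioo] at ha hb
    rw [hderiv, hderiv]
    apply mul_le_mul_of_nonneg_left _ (Nat.cast_nonneg _)
    apply pow_le_pow_left₀ (by nlinarith [ha.1, ha.2])
    nlinarith [ha.1, ha.2, hb.1, hb.2]

noncomputable def hAux (lam v : ℝ) : ℝ := (v - 1 + (1 + v)⁻¹) / lam ^ 2

lemma hAux_value {lam v : ℝ} (hv : 0 ≤ v) : hAux lam v = v ^ 2 / (lam ^ 2 * (1 + v)) := by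
  have h1 : (1:ℝ) + v ≠ 0 := ne_of_gt (by linarith)
  rw [hAux]
  rcases eq_or_ne lam 0 with h | h
  · simp [h]
  · field_simp
    ring

lemma inv_conv {X Y a b : ℝ} (hX : 0 < X) (hY : 0 < Y) (ha : 0 ≤ a) (hb : 0 ≤ b)
    (hab : a + b = 1) : (a * X + b * Y)⁻¹ ≤ a * X⁻¹ + b * Y⁻¹ := by
  have hD : 0 < a * X + b * Y := by
    rcases lt_or_eq_of_le ha with h | h
    · exact add_pos_of_pos_of_nonneg (mul_pos h hX) (mul_nonneg hb hY.le)
    · have hb1 : b = 1 := by linarith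
      rw [← h, hb1]; simpa using hY
  have key : 1 * (X * Y) ≤ (a * Y + b * X) * (a * X + b * Y) := by
    have hb' : b = 1 - a := by linarith
    subst hb'
    nlinarith [mul_nonneg (mul_nonneg ha hb) (sq_nonneg (X - Y))]
  have hXY : (0:ℝ) < X * Y := mul_pos hX hY
  have hrhs : a * X⁻¹ + b * Y⁻¹ = (a * Y + b * X) / (X * Y) := by
    field_simp
  rw [hrhs, inv_eq_one_div, div_le_div_iff₀ hD hXY]
  exact key

lemma hAux_mono {lam v w : ℝ} (hl : 0 < lam) (hv : 0 ≤ v) (hvw : v ≤ w) :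
    hAux lam v ≤ hAux lam w := by
  have hc : (0:ℝ) < lam ^ 2 := by positivity
  have he : (1 + v)⁻¹ - (1 + w)⁻¹ = (w - v) / ((1 + v) * (1 + w)) := by
    have h1 : (1:ℝ) + v ≠ 0 := ne_of_gt (by linarith)
    have h2 : (1:ℝ) + w ≠ 0 := ne_of_gt (by linarith)
    field_simp
    ring
  have hd : (w - v) / ((1 + v) * (1 + w)) ≤ w - v := by
    apply div_le_self (by linarith) (by nlinarith)
  rw [hAux, hAux, div_le_div_iff_of_pos_right hc]
  linarith
  
lemma hAux_cvx {lam v w a b : ℝ} (hl : 0 < lam) (hv : 0 ≤ v) (hw : 0 ≤ w) (ha : 0 ≤ a)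
    (hb : 0 ≤ b) (hab : a + b = 1) :
    hAux lam (a * v + b * w) ≤ a * hAux lam v + b * hAux lam w := by
  have hc : (0:ℝ) < lam ^ 2 := by positivity
  have hinv : (1 + (a * v + b * w))⁻¹ ≤ a * (1 + v)⁻¹ + b * (1 + w)⁻¹ := by
    have h := inv_conv (X := 1 + v) (Y := 1 + w) (by linarith) (by linarith) ha hb hab
    have he : a * (1 + v) + b * (1 + w) = 1 + (a * v + b * w) := by
      have : a * (1 + v) + b * (1 + w) = (a + b) + (a * v + b * w) := by ring
      rw [this, hab]
    rwa [he] at h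
  rw [hAux, hAux, hAux]
  have hnum : (a * v + b * w) - 1 + (1 + (a * v + b * w))⁻¹
      ≤ a * (v - 1 + (1 + v)⁻¹) + b * (w - 1 + (1 + w)⁻¹) := by
    have hr : a * (v - 1 + (1 + v)⁻¹) + b * (w - 1 + (1 + w)⁻¹)
        = (a * v + b * w) - (a + b) + (a * (1 + v)⁻¹ + b * (1 + w)⁻¹) := by ring
    rw [hr, hab]
    linarith
  calc (a * v + b * w - 1 + (1 + (a * v + b * w))⁻¹) / lam ^ 2
      ≤ (a * (v - 1 + (1 + v)⁻¹) + b * (w - 1 + (1 + w)⁻¹)) / lam ^ 2 :=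
        (div_le_div_iff_of_pos_right hc).mpr hnum
    _ = a * ((v - 1 + (1 + v)⁻¹) / lam ^ 2) + b * ((w - 1 + (1 + w)⁻¹) / lam ^ 2) := by ring

noncomputable def gammaMaj (lam : ℝ) (z : ℝ) : ℝ :=
  1 / 2 - lam / 8 * hAux lam (lam * |1 - 2 * z|)

lemma gammaMaj_symm (lam x : ℝ) : gammaMaj lam (1 - x) = gammaMaj lam x := by
  rw [gammaMaj, gammaMaj, show (1:ℝ) - 2 * (1 - x) = -(1 - 2 * x) by ring, abs_neg]

lemma gammaMaj_eq {lam x : ℝ} (hl : 0 < lam) (ht : 0 ≤ 1 - 2 * x) :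
    gammaMaj lam x = 1 / 2 - lam / 8 * ((1 - 2 * x) ^ 2 / (1 + lam * (1 - 2 * x))) := by
  rw [gammaMaj, abs_of_nonneg ht, hAux_value (mul_nonneg hl.le ht)]
  congr 1
  have hden : (0:ℝ) < 1 + lam * (1 - 2 * x) := by
    have := mul_nonneg hl.le ht
    linarith
  rw [mul_pow]
  rw [show lam ^ 2 * (1 + lam * (1 - 2 * x)) = lam ^ 2 * (1 + lam * (1 - 2 * x)) from rfl]
  congr 1
  field_simp

lemma gammaMaj_concave {lam : ℝ} (hl : 0 < lam) : ConcaveOn ℝ (Set.Icc (0:ℝ) 1) (gammaMaj lam) := by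
  constructor
  · exact convex_Icc _ _
  · intro x _ y _ a b ha hb hab
    simp only [gammaMaj, smul_eq_mul]
    have h1 : lam * |1 - 2 * (a * x + b * y)| ≤ a * (lam * |1 - 2 * x|) + b * (lam * |1 - 2 * y|) := by
      have habs : |1 - 2 * (a * x + b * y)| ≤ a * |1 - 2 * x| + b * |1 - 2 * y| := by
        have he : 1 - 2 * (a * x + b * y) = a * (1 - 2 * x) + b * (1 - 2 * y) := by
          have : a * (1 - 2 * x) + b * (1 - 2 * y) = (a + b) - 2 * (a * x + b * y) := by ring
          rw [this, hab]
        rw [he]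
        calc |a * (1 - 2 * x) + b * (1 - 2 * y)| ≤ |a * (1 - 2 * x)| + |b * (1 - 2 * y)| :=
              abs_add_le _ _
          _ = a * |1 - 2 * x| + b * |1 - 2 * y| := by
              rw [abs_mul, abs_mul, abs_of_nonneg ha, abs_of_nonneg hb]
      calc lam * |1 - 2 * (a * x + b * y)| ≤ lam * (a * |1 - 2 * x| + b * |1 - 2 * y|) :=
            mul_le_mul_of_nonneg_left habs hl.le
        _ = a * (lam * |1 - 2 * x|) + b * (lam * |1 - 2 * y|) := by ring
    have h2 : hAux lam (lam * |1 - 2 * (a * x + b * y)|)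
        ≤ a * hAux lam (lam * |1 - 2 * x|) + b * hAux lam (lam * |1 - 2 * y|) := by
      calc hAux lam (lam * |1 - 2 * (a * x + b * y)|)
          ≤ hAux lam (a * (lam * |1 - 2 * x|) + b * (lam * |1 - 2 * y|)) :=
            hAux_mono hl (by positivity) h1
        _ ≤ a * hAux lam (lam * |1 - 2 * x|) + b * hAux lam (lam * |1 - 2 * y|) :=
            hAux_cvx hl (by positivity) (by positivity) ha hb hab
    have h3 : lam / 8 * hAux lam (lam * |1 - 2 * (a * x + b * y)|)
        ≤ lam / 8 * (a * hAux lam (lam * |1 - 2 * x|) + b * hAux lam (lam * |1 - 2 * y|)) :=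
      mul_le_mul_of_nonneg_left h2 (by linarith)
    nlinarith [h3]

lemma gammaMaj_ge (K : ℕ) {lam : ℝ} (hl : 1 ≤ lam) (hK4 : (1 - (1 / lam) ^ 2) ^ K ≤ 1 / 4) :
    ∀ x ∈ Set.Icc (0:ℝ) 1, majErr K x ≤ gammaMaj lam x := by
  have hl0 : (0:ℝ) < lam := by linarith
  have hil : 1 / lam ≤ 1 := by rw [div_le_one hl0]; linarith
  have hil0 : 0 < 1 / lam := by positivity
  have claim : ∀ x, 0 ≤ x → x ≤ 1 / 2 → majErr K x ≤ gammaMaj lam x := by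
    intro x h0 h12
    have ht0 : (0:ℝ) ≤ 1 - 2 * x := by linarith
    have ht1 : 1 - 2 * x ≤ 1 := by linarith
    rw [majErr_eq, gammaMaj_eq hl0 ht0]
    set t := 1 - 2 * x with hts
    have hprod : 0 ≤ lam * t := mul_nonneg hl0.le ht0
    have hden : (0:ℝ) < 1 + lam * t := by linarith
    have hkey : tailSum K x ≤ 1 / 2 - lam / 8 * (t / (1 + lam * t)) := by
      rcases le_or_gt (1 / lam) t with hcase | hcase
      · have h1 : tailSum K x ≤ (1 - t ^ 2) ^ K := by
          have hp0 : (0:ℝ) ≤ 4 * x * (1 - x) := by nlinarith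
          calc tailSum K x ≤ x * (4 * x * (1 - x)) ^ K := tailSum_le K h0 h12
            _ ≤ 1 * (4 * x * (1 - x)) ^ K :=
                mul_le_mul_of_nonneg_right (by linarith) (pow_nonneg hp0 K)
            _ = (1 - t ^ 2) ^ K := by rw [one_mul]; congr 1; rw [hts]; ring
        have h2 : (1 - t ^ 2) ^ K ≤ (1 - (1 / lam) ^ 2) ^ K := by
          apply pow_le_pow_left₀ (by nlinarith) (by nlinarith)
        have h3 : lam / 8 * (t / (1 + lam * t)) ≤ 1 / 8 := by
          calc lam / 8 * (t / (1 + lam * t)) = 1 / 8 * (lam * t / (1 + lam * t)) := by ring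
            _ ≤ 1 / 8 * 1 := by
                apply mul_le_mul_of_nonneg_left _ (by norm_num)
                rw [div_le_one hden]; linarith
            _ = 1 / 8 := mul_one _
        linarith [h1.trans (h2.trans hK4)]
      · set x₀ := (1 - 1 / lam) / 2 with hx0
        have hx₀1 : (0:ℝ) ≤ x₀ := by rw [hx0]; linarith
        have hx₀2 : x₀ ≤ 1 / 2 := by rw [hx0]; linarith
        have htx₀ : tailSum K x₀ ≤ 1 / 4 := by
          have hp0 : (0:ℝ) ≤ 4 * x₀ * (1 - x₀) := by nlinarith
          calc tailSum K x₀ ≤ x₀ * (4 * x₀ * (1 - x₀)) ^ K := tailSum_le K hx₀1 hx₀2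
            _ ≤ 1 * (4 * x₀ * (1 - x₀)) ^ K :=
                mul_le_mul_of_nonneg_right (by linarith) (pow_nonneg hp0 K)
            _ = (1 - (1 / lam) ^ 2) ^ K := by rw [one_mul]; congr 1; rw [hx0]; ring
            _ ≤ 1 / 4 := hK4
        have ha0 : (0:ℝ) ≤ lam * t := hprod
        have ha1 : lam * t ≤ 1 := by
          calc lam * t ≤ lam * (1 / lam) := mul_le_mul_of_nonneg_left hcase.le hl0.le
            _ = 1 := by field_simp
        have hxeq : x = (1 - t) / 2 := by rw [hts]; ring
        have hxcomb : (lam * t) * x₀ + (1 - lam * t) * (1 / 2) = x := by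
          rw [hx0, hxeq]
          field_simp
          ring
        have hhalf : (1:ℝ) / 2 ∈ Set.Icc (0:ℝ) (1/2) := by constructor <;> norm_num
        have hcc := (convexOn_tailSum K).2 ⟨hx₀1, hx₀2⟩ hhalf ha0 (by linarith)
          (by ring : lam * t + (1 - lam * t) = 1)
        simp only [smul_eq_mul] at hcc
        rw [hxcomb, tailSum_half] at hcc
        have h5 : (lam * t) * tailSum K x₀ ≤ (lam * t) * (1 / 4) :=
          mul_le_mul_of_nonneg_left htx₀ ha0
        have h6 : lam / 8 * (t / (1 + lam * t)) ≤ lam * t / 4 := by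
          have h7 : t / (1 + lam * t) ≤ t := div_le_self ht0 (by linarith)
          calc lam / 8 * (t / (1 + lam * t)) ≤ lam / 8 * t :=
                mul_le_mul_of_nonneg_left h7 (by linarith)
            _ ≤ lam * t / 4 := by nlinarith
        linarith
    have hmul := mul_le_mul_of_nonneg_left hkey ht0
    have he : t * (1 / 2 - lam / 8 * (t / (1 + lam * t)))
        = t / 2 - lam / 8 * (t ^ 2 / (1 + lam * t)) := by
      field_simp
    rw [he] at hmul
    have hx2 : x = 1 / 2 - t / 2 := by rw [hts]; ring
    linarith
  intro x hx
  rcases le_or_gt x (1 / 2) with h | h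
  · exact claim x hx.1 h
  · have hcl := claim (1 - x) (by linarith [hx.2]) (by linarith)
    rw [majErr_symm, gammaMaj_symm] at hcl
    exact hcl

lemma gamma_le_val (k : ℕ) {q : ℝ} (h0 : 0 ≤ q) (hq : q ≤ 1 / 2)
    (ht : 1 - 2 * q ≤ 1 / (8 * (natB k : ℝ))) :
    gammaMaj (8 * (natB k : ℝ)) q ≤ majErr k q := by
  set B := (natB k : ℝ) with hBdef
  have hB : (1:ℝ) ≤ B := by
    rw [hBdef]
    exact_mod_cast natB_ge k
  clear_value B
  have hl0 : (0:ℝ) < 8 * B := by linarith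
  have ht0 : (0:ℝ) ≤ 1 - 2 * q := by linarith
  rw [majErr_eq, gammaMaj_eq hl0 ht0]
  set t := 1 - 2 * q with hts
  clear_value t
  have hprod : 0 ≤ 8 * B * t := mul_nonneg hl0.le ht0
  have hden : (0:ℝ) < 1 + 8 * B * t := by linarith
  have hBt : 8 * B * t ≤ 1 := by
    calc 8 * B * t ≤ 8 * B * (1 / (8 * B)) := mul_le_mul_of_nonneg_left ht hl0.le
      _ = 1 := by field_simp
  have hq2 : q = 1 / 2 - t / 2 := by rw [hts]; ring
  have hw := one_sub_two_tail_le k h0 hq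
  rw [← hts, ← hBdef] at hw
  -- goal: 1/2 - (8B)/8 * (t^2/(1+8Bt)) ≤ q + t * tail
  -- suffices (t/2) * (1 - 2 tail) ≤ B * t^2/(1+8Bt)
  have hkey : (t / 2) * (1 - 2 * tailSum k q) ≤ 8 * B / 8 * (t ^ 2 / (1 + 8 * B * t)) := by
    have he8 : 8 * B / 8 * (t ^ 2 / (1 + 8 * B * t)) = B * t ^ 2 / (1 + 8 * B * t) := by ring
    rw [he8]
    set w := 1 - 2 * tailSum k q with hwdef
    clear_value w
    rcases le_or_gt w 0 with hneg | hpos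
    · have hL : (t / 2) * w ≤ 0 :=
        mul_nonpos_of_nonneg_of_nonpos (by linarith) hneg
      have hR : (0:ℝ) ≤ B * t ^ 2 / (1 + 8 * B * t) := by positivity
      linarith
    · rw [le_div_iff₀ hden]
      have h1 : t * w ≤ t * (B * t) := mul_le_mul_of_nonneg_left hw ht0
      have h2 : (t / 2) * w * (8 * B * t) ≤ (t / 2) * w * 1 := by
        apply mul_le_mul_of_nonneg_left hBt
        apply mul_nonneg (by linarith) hpos.le
      nlinarith [h1, h2]
  linarith [hkey]

lemma line_majorizes (K : ℕ) {s η : ℝ} (hη0 : 0 < η) (hη1 : η ≤ 1)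
    (hKη : 1 / η ^ 3 ≤ (K : ℝ)) (hs : 1 + η ≤ s) :
    ∀ x ∈ Set.Icc (0:ℝ) 1, majErr K x ≤ s * x := by
  have hs0 : (0:ℝ) ≤ s := by linarith
  have claim : ∀ x, 0 ≤ x → x ≤ 1 / 2 → majErr K x ≤ (1 + η) * x := by
    intro x h0 h12
    rw [majErr_eq]
    have ht0 : (0:ℝ) ≤ 1 - 2 * x := by linarith
    have ht1 : 1 - 2 * x ≤ 1 := by linarith
    have h1 : tailSum K x ≤ x * (4 * x * (1 - x)) ^ K := tailSum_le K h0 h12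
    have h2 : 4 * x * (1 - x) = 1 - (1 - 2 * x) ^ 2 := by ring
    have h3 : (1 - 2 * x) * (1 - (1 - 2 * x) ^ 2) ^ K ≤ η := bern_eta K ht0 ht1 hη0 hη1 hKη
    calc x + (1 - 2 * x) * tailSum K x
        ≤ x + (1 - 2 * x) * (x * (1 - (1 - 2 * x) ^ 2) ^ K) := by
          have := mul_le_mul_of_nonneg_left h1 ht0
          rw [h2] at this
          linarith
      _ = x + x * ((1 - 2 * x) * (1 - (1 - 2 * x) ^ 2) ^ K) := by ring
      _ ≤ x + x * η := by
          have := mul_le_mul_of_nonneg_left h3 h0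
          linarith
      _ = (1 + η) * x := by ring
  intro x hx
  rcases le_or_gt x (1 / 2) with h | h
  · calc majErr K x ≤ (1 + η) * x := claim x hx.1 h
      _ ≤ s * x := mul_le_mul_of_nonneg_right hs hx.1
  · have hcl := claim (1 - x) (by linarith [hx.2]) (by linarith)
    rw [majErr_symm] at hcl
    calc majErr K x ≤ (1 + η) * (1 - x) := hcl
      _ ≤ (1 + η) * (1 / 2) := mul_le_mul_of_nonneg_left (by linarith) (by linarith)
      _ ≤ s * (1 / 2) := mul_le_mul_of_nonneg_right hs (by norm_num)
      _ ≤ s * x := mul_le_mul_of_nonneg_left h.le hs0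

set_option maxHeartbeats 1000000 in
theorem concEnv_majErr_le (k : ℕ) (ε : ℝ) (hε : 0 < ε) :
    ∃ K : ℕ, ∀ p ∈ Set.Icc ε (1 - ε), concEnv (majErr K) p ≤ majErr k p := by
  set B : ℝ := (natB k : ℝ) with hBdef
  have hB : (1:ℝ) ≤ B := by rw [hBdef]; exact_mod_cast natB_ge k
  refine ⟨Nat.ceil (512 * B ^ 3 / ε ^ (6 * k)), ?_⟩
  set K := Nat.ceil (512 * B ^ 3 / ε ^ (6 * k)) with hKdef
  intro p hp
  obtain ⟨hp1, hp2⟩ := hp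
  have hε2 : ε ≤ 1 / 2 := by linarith
  have hε1 : ε ≤ 1 := by linarith
  have hp0 : 0 < p := lt_of_lt_of_le hε hp1
  have hp1' : p ≤ 1 := by linarith
  have hpmem : p ∈ Set.Icc (0:ℝ) 1 := ⟨hp0.le, hp1'⟩
  have hεp : (0:ℝ) < ε ^ (6 * k) := by positivity
  have hεp1 : ε ^ (6 * k) ≤ 1 := pow_le_one₀ hε.le hε1
  have hεp2 : (0:ℝ) < ε ^ (2 * k) := by positivity
  have hεp21 : ε ^ (2 * k) ≤ 1 := pow_le_one₀ hε.le hε1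
  set η := ε ^ (2 * k) / (8 * B) with hηdef
  clear_value B K η
  have h8B : (0:ℝ) < 8 * B := by linarith
  have hη0 : 0 < η := by rw [hηdef]; exact div_pos hεp2 h8B
  have hη1 : η ≤ 1 := by
    rw [hηdef, div_le_one h8B]
    linarith
  have hKc : 512 * B ^ 3 / ε ^ (6 * k) ≤ (K : ℝ) := by
    rw [hKdef]
    exact Nat.le_ceil _
  have hKη : 1 / η ^ 3 ≤ (K : ℝ) := by
    have hcube : (ε ^ (2 * k)) ^ 3 = ε ^ (6 * k) := by
      rw [← pow_mul]
      congr 1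
      omega
    have he : 1 / η ^ 3 = 512 * B ^ 3 / ε ^ (6 * k) := by
      rw [hηdef, div_pow, hcube, one_div_div]
      congr 1
      ring
    rw [he]
    exact hKc
  have hK4 : (1 - (1 / (8 * B)) ^ 2) ^ K ≤ 1 / 4 := by
    have ha0 : (0:ℝ) ≤ (1 / (8 * B)) ^ 2 := sq_nonneg _
    have hle1 : 1 / (8 * B) ≤ 1 := by rw [div_le_one h8B]; linarith
    have ha1 : (1 / (8 * B)) ^ 2 ≤ 1 := pow_le_one₀ (by positivity) hle1
    have h1 := pow_one_sub_le' K ha0 ha1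
    have hKB : 512 * B ^ 3 ≤ (K : ℝ) := by
      refine le_trans ?_ hKc
      rw [le_div_iff₀ hεp]
      have hB0 : (0:ℝ) < B := by linarith
      have hB3 : (0:ℝ) < B ^ 3 := pow_pos hB0 3
      have hBnn : (0:ℝ) ≤ 512 * B ^ 3 := by linarith
      nlinarith [mul_le_mul_of_nonneg_left hεp1 hBnn]
    have hKa : 3 ≤ (K : ℝ) * (1 / (8 * B)) ^ 2 := by
      have he2 : (K : ℝ) * (1 / (8 * B)) ^ 2 = (K : ℝ) / (64 * B ^ 2) := by
        have h8B2 : (8 * B) ^ 2 = 64 * B ^ 2 := by ring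
        rw [div_pow, one_pow, h8B2, mul_one_div]
      rw [he2, le_div_iff₀ (by nlinarith : (0:ℝ) < 64 * B ^ 2)]
      nlinarith [hKB, hB]
    have hpos : (0:ℝ) < 1 + (K : ℝ) * (1 / (8 * B)) ^ 2 := by linarith
    calc (1 - (1 / (8 * B)) ^ 2) ^ K ≤ 1 / (1 + (K : ℝ) * (1 / (8 * B)) ^ 2) := h1
      _ ≤ 1 / 4 := by
          rw [div_le_div_iff₀ hpos (by norm_num)]
          linarith
  have hbdd : BddBelow {y : ℝ | ∃ g : ℝ → ℝ, ConcaveOn ℝ (Set.Icc (0:ℝ) 1) g ∧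
      (∀ x ∈ Set.Icc (0:ℝ) 1, majErr K x ≤ g x) ∧ y = g p} := by
    refine ⟨majErr K p, ?_⟩
    rintro y ⟨g, hgc, hgm, rfl⟩
    exact hgm p hpmem
  have main : ∀ q, ε ≤ q → q ≤ 1 / 2 →
      ∃ g : ℝ → ℝ, ConcaveOn ℝ (Set.Icc (0:ℝ) 1) g ∧
        (∀ x ∈ Set.Icc (0:ℝ) 1, majErr K x ≤ g x) ∧ g q ≤ majErr k q := by
    intro q hq1 hq2
    have hq0 : 0 < q := lt_of_lt_of_le hε hq1
    rcases le_or_gt (1 - 2 * q) (1 / (8 * B)) with hreg | hreg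
    · rw [hBdef] at hreg
      have hval := gamma_le_val k hq0.le hq2 hreg
      rw [← hBdef] at hval
      exact ⟨gammaMaj (8 * B), gammaMaj_concave (by linarith),
        gammaMaj_ge K (by linarith) hK4, hval⟩
    · set s := majErr k q / q with hsdef
      clear_value s
      have htail : q ^ (2 * k + 1) ≤ tailSum k q := tailSum_ge_pow k hq0.le (by linarith)
      have htailnn : 0 ≤ tailSum k q := tailSum_nonneg k hq0.le (by linarith)
      have htq : 1 / (8 * B) * (q * ε ^ (2 * k)) ≤ (1 - 2 * q) * tailSum k q := by
        have h1 : ε ^ (2 * k) ≤ q ^ (2 * k) := pow_le_pow_left₀ hε.le hq1 _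
        have h2 : q * ε ^ (2 * k) ≤ q ^ (2 * k + 1) := by
          calc q * ε ^ (2 * k) ≤ q * q ^ (2 * k) := mul_le_mul_of_nonneg_left h1 hq0.le
            _ = q ^ (2 * k + 1) := by rw [pow_succ]; ring
        calc 1 / (8 * B) * (q * ε ^ (2 * k))
            ≤ 1 / (8 * B) * tailSum k q :=
              mul_le_mul_of_nonneg_left (h2.trans htail) (by positivity)
          _ ≤ (1 - 2 * q) * tailSum k q :=
              mul_le_mul_of_nonneg_right hreg.le htailnn
      have hs : 1 + η ≤ s := by
        rw [hsdef, le_div_iff₀ hq0, majErr_eq]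
        have heq : η * q = 1 / (8 * B) * (q * ε ^ (2 * k)) := by
          rw [hηdef]
          ring
        linarith [htq, heq]
      refine ⟨fun x => s * x, ?_, line_majorizes K hη0 hη1 hKη hs, ?_⟩
      · constructor
        · exact convex_Icc _ _
        · intro x _ y _ a b ha hb hab
          simp only [smul_eq_mul]
          apply le_of_eq
          ring
      · show s * q ≤ majErr k q
        rw [hsdef, div_mul_cancel₀ _ (ne_of_gt hq0)]
  rw [concEnv]
  rcases le_or_gt p (1 / 2) with hple | hple
  · obtain ⟨g, hgc, hgm, hgv⟩ := main p hp1 hple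
    calc sInf {y : ℝ | ∃ g : ℝ → ℝ, ConcaveOn ℝ (Set.Icc (0:ℝ) 1) g ∧
        (∀ x ∈ Set.Icc (0:ℝ) 1, majErr K x ≤ g x) ∧ y = g p} ≤ g p :=
          csInf_le hbdd ⟨g, hgc, hgm, rfl⟩
      _ ≤ majErr k p := hgv
  · obtain ⟨g, hgc, hgm, hgv⟩ := main (1 - p) (by linarith) (by linarith)
    have hmem : ∀ x ∈ Set.Icc (0:ℝ) 1, (1 - x) ∈ Set.Icc (0:ℝ) 1 :=
      fun x hx => ⟨by linarith [hx.2], by linarith [hx.1]⟩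
    have hconc : ConcaveOn ℝ (Set.Icc (0:ℝ) 1) (fun x => g (1 - x)) := by
      constructor
      · exact convex_Icc _ _
      · intro x hx y hy a b ha hb hab
        have he : 1 - (a * x + b * y) = a * (1 - x) + b * (1 - y) := by
          have h' : a * (1 - x) + b * (1 - y) = (a + b) - (a * x + b * y) := by ring
          rw [h', hab]
        have h2 := hgc.2 (hmem x hx) (hmem y hy) ha hb hab
        simp only [smul_eq_mul] at h2 ⊢
        rw [he]
        exact h2
    have hmaj : ∀ x ∈ Set.Icc (0:ℝ) 1, majErr K x ≤ g (1 - x) := by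
      intro x hx
      rw [← majErr_symm]
      exact hgm (1 - x) (hmem x hx)
    calc sInf {y : ℝ | ∃ g : ℝ → ℝ, ConcaveOn ℝ (Set.Icc (0:ℝ) 1) g ∧
        (∀ x ∈ Set.Icc (0:ℝ) 1, majErr K x ≤ g x) ∧ y = g p} ≤ g (1 - p) :=
          csInf_le hbdd ⟨fun x => g (1 - x), hconc, hmaj, rfl⟩
      _ ≤ majErr k (1 - p) := hgv
      _ = majErr k p := majErr_symm k p
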